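/- Suppose Ω is a Cantor group with identity ω_e and compatible metric dist that admits a minimal ℤ^d action by translations {T^n}_{n∈ℤ^d}. Define f : Ω → ℝ by f(ω) = dist(ω_e, ω) and φ : Ω → ℓ∞(ℤ^d) by φ(ω) = (f(T^n ω))_{n∈ℤ^d}. Then φ is injective and continuous; consequently φ is a homeomorphism from Ω onto hull(φ(ω_e)), so hull(φ(ω_e)) is isomorphic as a topological group to Ω. -/

import Mathlib

open Filter Topology

/-- Translation action of `ℤ^d` on `ℓ^∞(ℤ^d)`: `(S_m V)(n) = V(n - m)`. -/
noncomputable def Sh {d : ℕ} (m : Fin d → ℤ) (V : lp (fun _ : Fin d → ℤ => ℝ) ⊤) :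
    lp (fun _ : Fin d → ℤ => ℝ) ⊤ :=
  ⟨fun n => V (n - m), by
    show Memℓp (fun n : Fin d → ℤ => V (n - m)) ⊤
    have h : Memℓp (fun n : Fin d → ℤ => V n) ⊤ := lp.memℓp V
    rw [memℓp_infty_iff] at h ⊢
    have hsurj : Function.Surjective (fun n : Fin d → ℤ => n - m) :=
      fun y => ⟨y + m, by simp⟩
    have heq : (Set.range fun n : Fin d → ℤ => ‖V (n - m)‖) =
        Set.range fun n : Fin d → ℤ => ‖V n‖ := by
      have h2 : (fun n : Fin d → ℤ => ‖V (n - m)‖) =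
          (fun n => ‖V n‖) ∘ (fun n : Fin d → ℤ => n - m) := rfl
      rw [h2, Set.range_comp, hsurj.range_eq, Set.image_univ]
    rwa [heq]⟩

/-- `V ∈ ℓ^∞(ℤ^d)` is periodic if its orbit under translations is finite. -/
def PeriodicSeq {d : ℕ} (V : lp (fun _ : Fin d → ℤ => ℝ) ⊤) : Prop :=
  (Set.range fun m : Fin d → ℤ => Sh m V).Finite

/-- `V ∈ ℓ^∞(ℤ^d)` is limit-periodic if it lies in the `ℓ^∞`-closure of the periodic
elements. -/
def LimitPeriodicSeq {d : ℕ} (V : lp (fun _ : Fin d → ℤ => ℝ) ⊤) : Prop :=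
  V ∈ closure {W : lp (fun _ : Fin d → ℤ => ℝ) ⊤ | PeriodicSeq W}

/-- The hull of `V ∈ ℓ^∞(ℤ^d)`: the closure of its translation orbit. -/
noncomputable def hullSet {d : ℕ} (V : lp (fun _ : Fin d → ℤ => ℝ) ⊤) :
    Set (lp (fun _ : Fin d → ℤ => ℝ) ⊤) :=
  closure (Set.range fun m : Fin d → ℤ => Sh m V)

set_option maxHeartbeats 1000000 in
set_option synthInstance.maxHeartbeats 1000000 in
/-- Let `Ω` be a Cantor group with compatible metric `dist` and a
minimal `ℤ^d` action by translations. With `f(ω) = dist(0, ω)` and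
`φ(ω) = (f(T^n ω))_n ∈ ℓ^∞(ℤ^d)`, the map `φ` is injective and continuous, and hence is a
homeomorphism from `Ω` onto `hull(φ(0))`; so `hull(φ(0))` is isomorphic as a topological
group to `Ω`. -/
theorem hull_isomorphic_to_group (d : ℕ) (Ω : Type) [MetricSpace Ω] [AddCommGroup Ω]
    [IsTopologicalAddGroup Ω] [CompactSpace Ω] [TotallyDisconnectedSpace Ω] [Infinite Ω]
    (α : Fin d → Ω)
    (hmin : ∀ ω : Ω, Dense (Set.range fun n : Fin d → ℤ => ω + ∑ j, n j • α j))
    (F : Ω → lp (fun _ : Fin d → ℤ => ℝ) ⊤)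
    (hF : ∀ (ω : Ω) (n : Fin d → ℤ), F ω n = dist (0 : Ω) (ω + ∑ j, n j • α j)) :
    Function.Injective F ∧
    Continuous F ∧
    ∃ ψ : Ω ≃ₜ hullSet (F 0),
      (∀ ω : Ω, ((ψ ω : hullSet (F 0)) : lp (fun _ : Fin d → ℤ => ℝ) ⊤) = F ω) ∧
      -- `ψ` is a group isomorphism for the group structure on the hull (the one for
      -- which `m ↦ S_m F(0)` is a homomorphism)
      ∀ mul : hullSet (F 0) → hullSet (F 0) → hullSet (F 0),
        Continuous (fun q : hullSet (F 0) × hullSet (F 0) => mul q.1 q.2) →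
        (∀ (m k : Fin d → ℤ) (hm : Sh m (F 0) ∈ hullSet (F 0))
          (hk : Sh k (F 0) ∈ hullSet (F 0)) (hmk : Sh (m + k) (F 0) ∈ hullSet (F 0)),
          mul ⟨Sh m (F 0), hm⟩ ⟨Sh k (F 0), hk⟩ = ⟨Sh (m + k) (F 0), hmk⟩) →
        ∀ ω₁ ω₂ : Ω, mul (ψ ω₁) (ψ ω₂) = ψ (ω₁ + ω₂) := by
  classical
  -- notation: the translation map
  set t : (Fin d → ℤ) → Ω := fun n => ∑ j, n j • α j with ht_def
  have ht_add : ∀ n m : Fin d → ℤ, t (n + m) = t n + t m := by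
    intro n m
    simp only [ht_def, Pi.add_apply, add_zsmul]
    exact Finset.sum_add_distrib
  -- injectivity
  have hinj : Function.Injective F := by
    intro ω₁ ω₂ h
    have hFeq : ∀ n : Fin d → ℤ, dist (0 : Ω) (ω₁ + t n) = dist (0 : Ω) (ω₂ + t n) := by
      intro n
      have := congrArg (fun V : lp (fun _ : Fin d → ℤ => ℝ) ⊤ => V n) h
      simpa [hF] using this
    have h0 : (0 : Ω) ∈ closure (Set.range fun n : Fin d → ℤ => ω₁ + t n) :=
      (hmin ω₁) 0
    rw [mem_closure_iff_seq_limit] at h0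
    obtain ⟨u, hu_mem, hu_lim⟩ := h0
    choose n hn using hu_mem
    have hlim1 : Filter.Tendsto (fun k => ω₁ + t (n k)) Filter.atTop (nhds 0) := by
      simpa [hn] using hu_lim
    have hlimt : Filter.Tendsto (fun k => t (n k)) Filter.atTop (nhds (-ω₁)) := by
      have := hlim1.const_add (-ω₁)
      simpa using this
    have hlim2 : Filter.Tendsto (fun k => ω₂ + t (n k)) Filter.atTop (nhds (ω₂ + -ω₁)) :=
      hlimt.const_add ω₂
    have hdist : Filter.Tendsto (fun k => dist (ω₂ + t (n k)) (0 : Ω))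
        Filter.atTop (nhds 0) := by
      have h1 : Filter.Tendsto (fun k => dist (0 : Ω) (ω₁ + t (n k)))
          Filter.atTop (nhds (dist (0 : Ω) (0 : Ω))) :=
        tendsto_const_nhds.dist hlim1
      simp only [dist_self] at h1
      have h2 : (fun k => dist (ω₂ + t (n k)) (0 : Ω)) =
          fun k => dist (0 : Ω) (ω₁ + t (n k)) := by
        funext k; rw [dist_comm, hFeq]
      rw [h2]; exact h1
    have hlim2' : Filter.Tendsto (fun k => ω₂ + t (n k)) Filter.atTop (nhds 0) :=
      tendsto_iff_dist_tendsto_zero.2 hdist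
    have : ω₂ + -ω₁ = 0 := tendsto_nhds_unique hlim2 hlim2'
    have : ω₂ = ω₁ := by
      have := congrArg (fun x => x + ω₁) this
      simpa using this
    exact this.symm
  -- uniform continuity
  have huc : UniformContinuous F := by
    have hadd : UniformContinuous (fun p : Ω × Ω => p.1 + p.2) :=
      CompactSpace.uniformContinuous_of_continuous continuous_add
    rw [Metric.uniformContinuous_iff] at hadd ⊢
    intro ε hε
    obtain ⟨δ, hδ, hadd'⟩ := hadd (ε / 2) (by linarith)
    refine ⟨δ, hδ, fun {a b} hab => ?_⟩
    have hbound : ∀ nn : Fin d → ℤ, ‖(F a - F b) nn‖ ≤ ε / 2 := by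
      intro nn
      have hcoord : (F a - F b) nn = F a nn - F b nn := lp.coeFn_sub (F a) (F b) ▸ rfl
      rw [hcoord, hF, hF]
      have h1 : |dist (0 : Ω) (a + t nn) - dist (0 : Ω) (b + t nn)| ≤
          dist (a + t nn) (b + t nn) := by
        rw [dist_comm (0 : Ω) (a + t nn), dist_comm (0 : Ω) (b + t nn)]
        exact abs_dist_sub_le _ _ _
      have h2 : dist (a + t nn) (b + t nn) < ε / 2 := by
        have hpd : dist ((a, t nn) : Ω × Ω) (b, t nn) < δ := by
          rw [Prod.dist_eq]; simp only [dist_self]; exact max_lt hab hδ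
        exact hadd' hpd
      calc ‖dist (0 : Ω) (a + t nn) - dist (0 : Ω) (b + t nn)‖
          = |dist (0 : Ω) (a + t nn) - dist (0 : Ω) (b + t nn)| := rfl
        _ ≤ dist (a + t nn) (b + t nn) := h1
        _ ≤ ε / 2 := le_of_lt h2
    have : ‖F a - F b‖ ≤ ε / 2 := lp.norm_le_of_forall_le (by linarith) hbound
    calc dist (F a) (F b) = ‖F a - F b‖ := dist_eq_norm _ _
      _ ≤ ε / 2 := this
      _ < ε := by linarith
  have hcont : Continuous F := huc.continuous
  -- Sh m (F 0) = F (t (-m))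
  have hShF : ∀ m : Fin d → ℤ, Sh m (F 0) = F (t (-m)) := by
    intro m
    apply lp.ext
    funext nn
    show (F 0) (nn - m) = F (t (-m)) nn
    rw [hF, hF]
    congr 1
    rw [zero_add]
    have : t (nn - m) = t (-m) + t nn := by
      rw [← ht_add]
      congr 1
      abel
    exact this
  -- density of the (negated) orbit of 0
  have hdense : Dense (Set.range fun m : Fin d → ℤ => t (-m)) := by
    have h1 : (Set.range fun m : Fin d → ℤ => t (-m)) = Set.range t := by
      have : (fun m : Fin d → ℤ => t (-m)) = t ∘ (fun m : Fin d → ℤ => -m) := rfl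
      rw [this, Set.range_comp, (neg_surjective).range_eq, Set.image_univ]
    rw [h1]
    have := hmin 0
    simpa [ht_def] using this
  have hcemb : IsClosedEmbedding F := hcont.isClosedEmbedding hinj
  have hrange : hullSet (F 0) = Set.range F := by
    show closure (Set.range fun m : Fin d → ℤ => Sh m (F 0)) = Set.range F
    have h1 : (Set.range fun m : Fin d → ℤ => Sh m (F 0)) =
        F '' (Set.range fun m : Fin d → ℤ => t (-m)) := by
      ext x
      constructor
      · rintro ⟨m, rfl⟩
        exact ⟨t (-m), ⟨m, rfl⟩, (hShF m).symm⟩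
      · rintro ⟨y, ⟨m, rfl⟩, rfl⟩
        exact ⟨m, hShF m⟩
    rw [h1, hcemb.closure_image_eq, hdense.closure_eq, Set.image_univ]
  have hmemF : ∀ ω : Ω, F ω ∈ hullSet (F 0) := by
    intro ω; rw [hrange]; exact ⟨ω, rfl⟩
  -- the equivalence
  have hbij : Function.Bijective (fun ω : Ω => (⟨F ω, hmemF ω⟩ : hullSet (F 0))) := by
    constructor
    · intro a b hab
      exact hinj (congrArg Subtype.val hab)
    · rintro ⟨x, hx⟩
      rw [hrange] at hx
      obtain ⟨ω, rfl⟩ := hx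
      exact ⟨ω, rfl⟩
  have hcontψ : Continuous (Equiv.ofBijective _ hbij) :=
    hcont.subtype_mk _
  refine ⟨hinj, hcont, Continuous.homeoOfEquivCompactToT2 hcontψ, fun ω => rfl, ?_⟩
  intro mul hcontmul hmul ω₁ ω₂
  set ψ := Continuous.homeoOfEquivCompactToT2 hcontψ with hψ
  have hψcoe : ∀ ω : Ω, ((ψ ω : hullSet (F 0)) : lp (fun _ : Fin d → ℤ => ℝ) ⊤) = F ω :=
    fun _ => rfl
  have hmemSh : ∀ m : Fin d → ℤ, Sh m (F 0) ∈ hullSet (F 0) :=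
    fun m => subset_closure ⟨m, rfl⟩
  have hψSh : ∀ m : Fin d → ℤ, ψ (t (-m)) = ⟨Sh m (F 0), hmemSh m⟩ := by
    intro m
    apply Subtype.ext
    rw [hψcoe]; exact (hShF m).symm
  have key : (fun p : Ω × Ω => mul (ψ p.1) (ψ p.2)) = fun p : Ω × Ω => ψ (p.1 + p.2) := by
    apply Continuous.ext_on (hdense.prod hdense)
    · exact hcontmul.comp ((ψ.continuous.comp continuous_fst).prodMk
        (ψ.continuous.comp continuous_snd))
    · exact ψ.continuous.comp (continuous_fst.add continuous_snd)
    · rintro ⟨x, y⟩ ⟨⟨m, rfl⟩, ⟨k, rfl⟩⟩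
      show mul (ψ (t (-m))) (ψ (t (-k))) = ψ (t (-m) + t (-k))
      have hsum : t (-m) + t (-k) = t (-(m + k)) := by
        rw [← ht_add]; congr 1; abel
      rw [hψSh m, hψSh k, hsum, hψSh (m + k)]
      exact hmul m k (hmemSh m) (hmemSh k) (hmemSh (m + k))
  exact congrFun key (ω₁, ω₂)
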